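/- arXiv:2001.08344 — 2 statements merged into one kernel-verified Lean document; each statement's English description precedes it below -/
import Mathlib

section
/- For all positive constants a, b and all z > 0, (b/(a+b))·e^{az} + (a/(a+b))·e^{-bz} ≥ 1. -/
theorem stmt0 (a b z : ℝ) (ha : 0 < a) (hb : 0 < b) (hz : 0 < z) :
    b / (a + b) * Real.exp (a * z) + a / (a + b) * Real.exp (-b * z) ≥ 1 := by
  have hab : 0 < a + b := by linarith
  have h1 := Real.add_one_le_exp (a * z)
  have h2 := Real.add_one_le_exp (-b * z)
  have hb' : (0:ℝ) ≤ b / (a + b) := by positivity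
  have ha' : (0:ℝ) ≤ a / (a + b) := by positivity
  have := mul_le_mul_of_nonneg_left h1 hb'
  have := mul_le_mul_of_nonneg_left h2 ha'
  have key : b / (a + b) * (a * z + 1) + a / (a + b) * (-b * z + 1) = 1 := by
    field_simp; ring
  nlinarith
end

section
/- Let M_Y(s) = E[e^{sY}] for a nonnegative random variable Y with 0 < E[Y], and let c > λE[Y] > 0, ρ > 0, β > 0. Then the equation ρ + β = cγ − λ(1 − M_Y(−γ)) has a unique positive solution γ. -/
open MeasureTheory

theorem stmt6 {Ω : Type*} [MeasurableSpace Ω] (μ : Measure Ω) [IsProbabilityMeasure μ]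
    (Y : Ω → ℝ) (hYm : Measurable Y) (hY0 : ∀ ω, 0 ≤ Y ω) (hYi : Integrable Y μ)
    (hEY : 0 < ∫ ω, Y ω ∂μ)
    (lam ρ β c : ℝ) (hlam : 0 < lam) (hρ : 0 < ρ) (hβ : 0 < β)
    (hc : lam * ∫ ω, Y ω ∂μ < c) :
    ∃! γ : ℝ, 0 < γ ∧
      ρ + β = c * γ - lam * (1 - ∫ ω, Real.exp (-(γ * Y ω)) ∂μ) := by
  set EY := ∫ ω, Y ω ∂μ with hEYdef
  set g : ℝ → ℝ := fun γ => c * γ - lam * (1 - ∫ ω, Real.exp (-(γ * Y ω)) ∂μ) with hg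
  -- integrability
  have hint : ∀ γ : ℝ, 0 ≤ γ → Integrable (fun ω => Real.exp (-(γ * Y ω))) μ := by
    intro γ hγ
    refine (integrable_const (1:ℝ)).mono'
      (Real.measurable_exp.comp ((measurable_const.mul hYm).neg)).aestronglyMeasurable ?_
    filter_upwards with ω
    rw [Real.norm_eq_abs, abs_of_pos (Real.exp_pos _)]
    exact Real.exp_le_one_iff.mpr (neg_nonpos.mpr (mul_nonneg hγ (hY0 ω)))
  -- key integral inequality
  have key : ∀ a b : ℝ, 0 ≤ a → a ≤ b →
      (∫ ω, Real.exp (-(a * Y ω)) ∂μ) - (∫ ω, Real.exp (-(b * Y ω)) ∂μ) ≤ (b - a) * EY := by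
    intro a b ha hab
    rw [← integral_sub (hint a ha) (hint b (ha.trans hab))]
    have h2 : (b - a) * EY = ∫ ω, (b - a) * Y ω ∂μ := (integral_const_mul _ _).symm
    rw [h2]
    refine integral_mono ((hint a ha).sub (hint b (ha.trans hab))) (hYi.const_mul _) ?_
    intro ω
    have hy := hY0 ω
    have hE : Real.exp (-(b * Y ω)) = Real.exp (-(a * Y ω)) * Real.exp (-((b - a) * Y ω)) := by
      rw [← Real.exp_add]; congr 1; ring
    have h1' : 1 - (b - a) * Y ω ≤ Real.exp (-((b - a) * Y ω)) := by
      have := Real.add_one_le_exp (-((b - a) * Y ω)); linarith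
    have h2' : Real.exp (-(a * Y ω)) ≤ 1 :=
      Real.exp_le_one_iff.mpr (neg_nonpos.mpr (mul_nonneg ha hy))
    have h3 : 0 < Real.exp (-(a * Y ω)) := Real.exp_pos _
    have ht : 0 ≤ (b - a) * Y ω := mul_nonneg (by linarith) hy
    simp only
    nlinarith [Real.exp_pos (-((b - a) * Y ω))]
  -- monotone comparison of integrals
  have imono : ∀ a b : ℝ, 0 ≤ a → a ≤ b →
      (∫ ω, Real.exp (-(b * Y ω)) ∂μ) ≤ (∫ ω, Real.exp (-(a * Y ω)) ∂μ) := by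
    intro a b ha hab
    refine integral_mono (hint b (ha.trans hab)) (hint a ha) ?_
    intro ω
    exact Real.exp_le_exp.mpr (by nlinarith [hY0 ω])
  have hK : 0 < c - lam * EY := by linarith
  have hEY0 : 0 ≤ EY := le_of_lt hEY
  -- bounds on increments of g
  have glow : ∀ a b : ℝ, 0 ≤ a → a ≤ b → g a + (c - lam * EY) * (b - a) ≤ g b := by
    intro a b ha hab
    have h := key a b ha hab
    simp only [hg]
    nlinarith [h]
  have gup : ∀ a b : ℝ, 0 ≤ a → a ≤ b → g b ≤ g a + c * (b - a) := by
    intro a b ha hab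
    have h := imono a b ha hab
    simp only [hg]
    nlinarith [h]
  have gmono : ∀ a b : ℝ, 0 ≤ a → a < b → g a < g b := by
    intro a b ha hab
    have := glow a b ha hab.le
    nlinarith [mul_pos hK (sub_pos.mpr hab)]
  -- g 0 = 0
  have hg0 : g 0 = 0 := by
    simp only [hg]
    simp
  -- continuity on Ici 0
  have hc0 : 0 < c := by nlinarith
  have hcont : ContinuousOn g (Set.Ici (0:ℝ)) := by
    have hlip : LipschitzOnWith (Real.toNNReal c) g (Set.Ici (0:ℝ)) := by
      rw [lipschitzOnWith_iff_dist_le_mul]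
      intro x hx y hy
      simp only [Set.mem_Ici] at hx hy
      rw [Real.dist_eq, Real.dist_eq, Real.coe_toNNReal c hc0.le]
      rcases le_total x y with h | h
      · have l := glow x y hx h
        have u := gup x y hx h
        rw [abs_of_nonpos (by nlinarith [mul_nonneg hK.le (sub_nonneg.mpr h)]),
          abs_of_nonpos (by linarith)]
        nlinarith
      · have l := glow y x hy h
        have u := gup y x hy h
        rw [abs_of_nonneg (by nlinarith [mul_nonneg hK.le (sub_nonneg.mpr h)]),
          abs_of_nonneg (by linarith)]
        nlinarith
    exact hlip.continuousOn
  -- choose right endpoint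
  set Γ : ℝ := (ρ + β) / (c - lam * EY) + 1 with hΓ
  have hΓpos : 0 < Γ := by positivity
  have hgΓ : ρ + β ≤ g Γ := by
    have := glow 0 Γ le_rfl hΓpos.le
    rw [hg0] at this
    have h2 : (c - lam * EY) * Γ = (ρ + β) + (c - lam * EY) := by
      rw [hΓ, mul_add, mul_one, mul_div_assoc', mul_div_right_comm, div_self hK.ne', one_mul]
    nlinarith
  -- IVT
  have hiv := intermediate_value_Icc hΓpos.le (hcont.mono (Set.Icc_subset_Ici_self))
  have hmem : ρ + β ∈ Set.Icc (g 0) (g Γ) := by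
    rw [hg0]; exact ⟨by positivity, hgΓ⟩
  obtain ⟨γ, hγmem, hγeq⟩ := hiv hmem
  have hγ0 : 0 ≤ γ := hγmem.1
  have hγpos : 0 < γ := by
    rcases hγ0.lt_or_eq with h | h
    · exact h
    · exfalso; rw [h, hγeq] at hg0; linarith
  refine ⟨γ, ⟨hγpos, hγeq.symm⟩, ?_⟩
  rintro γ' ⟨hγ'pos, hγ'eq⟩
  have hgγ' : g γ' = ρ + β := hγ'eq.symm
  by_contra hne
  rcases lt_or_gt_of_ne hne with h | h
  · have := gmono γ' γ hγ'pos.le h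
    rw [hgγ', hγeq] at this; exact lt_irrefl _ this
  · have := gmono γ γ' hγ0 h
    rw [hgγ', hγeq] at this; exact lt_irrefl _ this
end
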